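/- Let f : ℝ≥0 → ℝ≥0 be non-increasing with non-decreasing work, p ≥ 1, C > 0, β ∈ (0,1), γ the critical speed with f(γ) ≤ C and γ > 0. Suppose a finite set T of machines with speeds s_i > 0 satisfies f(γ) * (γ / s_i)^p * x_i ≤ C for all i ∈ T, where x_i ≥ 0 and Σ_{i∈T} x_i > 1 - β. Then σ_p(T) := (Σ_{i∈T} s_i^p)^{1/p} ≥ ((1-β) * f(γ)/C)^{1/p} * γ, and consequently f(σ_p(T)) ≤ (1/(1-β))^{1/p} * C. -/

import Mathlib

open NNReal

theorem stmt_14 {ι : Type*} (f : ℝ≥0 → ℝ≥0) (hf : Antitone f)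
    (hwork : Monotone fun s => s * f s)
    (p : ℝ) (hp : 1 ≤ p)
    (C : ℝ≥0) (hC : 0 < C)
    (β : ℝ≥0) (hβ0 : 0 < β) (hβ1 : β < 1)
    (γ : ℕ) (hγ0 : 0 < γ) (hγ : f (γ : ℝ≥0) ≤ C)
    (hγmin : ∀ q : ℕ, f q ≤ C → γ ≤ q)
    (T : Finset ι) (s x : ι → ℝ≥0) (hs : ∀ i ∈ T, 0 < s i)
    (hload : ∀ i ∈ T, f γ * ((γ : ℝ≥0) / s i) ^ p * x i ≤ C)
    (hx : 1 - β < ∑ i ∈ T, x i) :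
    ((1 - β) * f γ / C) ^ (1 / p) * (γ : ℝ≥0) ≤ (∑ i ∈ T, s i ^ p) ^ (1 / p) ∧
    f ((∑ i ∈ T, s i ^ p) ^ (1 / p)) ≤ (1 / (1 - β)) ^ (1 / p) * C := by
  have hp0 : p ≠ 0 := by positivity
  have hppos : (0:ℝ) < p := by positivity
  have h1β : (0:ℝ≥0) < 1 - β := tsub_pos_of_lt hβ1
  have h1β1 : (1 : ℝ≥0) - β ≤ 1 := tsub_le_self
  have hγpos : (0:ℝ≥0) < (γ:ℝ≥0) := by exact_mod_cast hγ0
  have hTne : T.Nonempty := by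
    by_contra h
    rw [Finset.not_nonempty_iff_eq_empty] at h
    simp only [h, Finset.sum_empty] at hx
    exact absurd hx (not_lt.2 (zero_le))
  have hsumpos : 0 < ∑ i ∈ T, s i ^ p := by
    obtain ⟨i, hi⟩ := hTne
    exact Finset.sum_pos' (fun j _ => zero_le)
      ⟨i, hi, NNReal.rpow_pos (hs i hi)⟩
  set σ : ℝ≥0 := (∑ i ∈ T, s i ^ p) ^ (1/p) with hσdef
  have hσpos : 0 < σ := NNReal.rpow_pos hsumpos
  -- pointwise: f γ * γ^p * x i ≤ C * s i ^ p
  have hpt : ∀ i ∈ T, f γ * (γ:ℝ≥0) ^ p * x i ≤ C * s i ^ p := by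
    intro i hi
    have hsp : (s i : ℝ≥0) ^ p ≠ 0 := (NNReal.rpow_pos (hs i hi)).ne'
    have h := hload i hi
    rw [NNReal.div_rpow] at h
    calc f γ * (γ:ℝ≥0) ^ p * x i
        = (f γ * ((γ:ℝ≥0) ^ p / s i ^ p) * x i) * s i ^ p := by
          field_simp
      _ ≤ C * s i ^ p := mul_le_mul_left h _
  have hsum : f γ * (γ:ℝ≥0) ^ p * (1 - β) ≤ C * ∑ i ∈ T, s i ^ p := by
    calc f γ * (γ:ℝ≥0) ^ p * (1 - β)
        ≤ f γ * (γ:ℝ≥0) ^ p * ∑ i ∈ T, x i := mul_le_mul_right hx.le _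
      _ = ∑ i ∈ T, f γ * (γ:ℝ≥0) ^ p * x i := by rw [Finset.mul_sum]
      _ ≤ ∑ i ∈ T, C * s i ^ p := Finset.sum_le_sum hpt
      _ = C * ∑ i ∈ T, s i ^ p := by rw [Finset.mul_sum]
  have hdiv : (1 - β) * f γ / C * (γ:ℝ≥0) ^ p ≤ ∑ i ∈ T, s i ^ p := by
    rw [div_mul_eq_mul_div, div_le_iff₀ hC]
    calc (1 - β) * f γ * (γ:ℝ≥0)^p = f γ * (γ:ℝ≥0)^p * (1-β) := by ring
      _ ≤ C * ∑ i ∈ T, s i ^ p := hsum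
      _ = (∑ i ∈ T, s i ^ p) * C := mul_comm _ _
  have hγeq : ((γ:ℝ≥0) ^ p) ^ (1/p) = (γ:ℝ≥0) := by
    rw [← NNReal.rpow_mul, mul_one_div_cancel hp0, NNReal.rpow_one]
  have hfirst : ((1 - β) * f γ / C) ^ (1/p) * (γ:ℝ≥0) ≤ σ := by
    calc ((1 - β) * f γ / C) ^ (1/p) * (γ:ℝ≥0)
        = ((1 - β) * f γ / C) ^ (1/p) * ((γ:ℝ≥0)^p) ^ (1/p) := by rw [hγeq]
      _ = ((1 - β) * f γ / C * (γ:ℝ≥0)^p) ^ (1/p) := (NNReal.mul_rpow).symm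
      _ ≤ σ := NNReal.rpow_le_rpow hdiv (by positivity)
  refine ⟨hfirst, ?_⟩
  have hA1 : (1:ℝ≥0) ≤ (1 / (1 - β)) ^ (1/p) := by
    apply NNReal.one_le_rpow
    · rw [le_div_iff₀ h1β]; simpa using h1β1
    · positivity
  rcases le_total (γ:ℝ≥0) σ with hle | hle
  · calc f σ ≤ f γ := hf hle
      _ ≤ C := hγ
      _ ≤ (1 / (1 - β)) ^ (1/p) * C := le_mul_of_one_le_left (zero_le) hA1
  · have hw : σ * f σ ≤ (γ:ℝ≥0) * f (γ:ℝ≥0) := hwork hle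
    by_cases hfγ : f (γ:ℝ≥0) = 0
    · have : σ * f σ = 0 := le_antisymm (by simpa [hfγ] using hw) (zero_le)
      have : f σ = 0 := by
        rcases mul_eq_zero.1 this with h | h
        · exact absurd h hσpos.ne'
        · exact h
      simp [this]
    · have hfγpos : 0 < f (γ:ℝ≥0) := pos_iff_ne_zero.2 hfγ
      set c : ℝ≥0 := ((1 - β) * f (γ:ℝ≥0) / C) ^ (1/p) with hc
      have hcpos : 0 < c := NNReal.rpow_pos (by positivity)
      have h1 : f σ ≤ (γ:ℝ≥0) * f (γ:ℝ≥0) / σ := by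
        rw [le_div_iff₀ hσpos, mul_comm]
        exact hw
      have h2 : (γ:ℝ≥0) * f (γ:ℝ≥0) / σ ≤ (γ:ℝ≥0) * f (γ:ℝ≥0) / (c * (γ:ℝ≥0)) := by
        apply div_le_div_of_nonneg_left (zero_le) (by positivity) hfirst
      have h3 : (γ:ℝ≥0) * f (γ:ℝ≥0) / (c * (γ:ℝ≥0)) = f (γ:ℝ≥0) / c := by
        rw [mul_comm (γ:ℝ≥0) (f (γ:ℝ≥0)), mul_comm c (γ:ℝ≥0), mul_comm (γ:ℝ≥0) c]
        exact mul_div_mul_right _ _ hγpos.ne'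
      have hCfγ : (1:ℝ≥0) ≤ C / f (γ:ℝ≥0) := by
        rw [le_div_iff₀ hfγpos]; simpa using hγ
      have hkey : f (γ:ℝ≥0) * (C / f (γ:ℝ≥0)) ^ (1/p) ≤ C := by
        calc f (γ:ℝ≥0) * (C / f (γ:ℝ≥0)) ^ (1/p)
            ≤ f (γ:ℝ≥0) * (C / f (γ:ℝ≥0)) := by
              apply mul_le_mul_right
              calc (C / f (γ:ℝ≥0)) ^ (1/p) ≤ (C / f (γ:ℝ≥0)) ^ (1:ℝ) :=
                NNReal.rpow_le_rpow_of_exponent_le hCfγ (by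
                  rw [div_le_one hppos]; exact hp)
                _ = C / f (γ:ℝ≥0) := NNReal.rpow_one _
          _ = C := by rw [mul_comm, div_mul_cancel₀ _ hfγ]
      have hcinv : c⁻¹ = (C / f (γ:ℝ≥0)) ^ (1/p) * (1 / (1 - β)) ^ (1/p) := by
        rw [hc, ← NNReal.inv_rpow, ← NNReal.mul_rpow]
        congr 1
        rw [inv_div, div_mul_div_comm, mul_one, mul_comm (f (γ:ℝ≥0)) (1 - β)]
      calc f σ ≤ (γ:ℝ≥0) * f (γ:ℝ≥0) / σ := h1
        _ ≤ (γ:ℝ≥0) * f (γ:ℝ≥0) / (c * (γ:ℝ≥0)) := h2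
        _ = f (γ:ℝ≥0) / c := h3
        _ = f (γ:ℝ≥0) * (C / f (γ:ℝ≥0)) ^ (1/p) * (1 / (1 - β)) ^ (1/p) := by
            rw [div_eq_mul_inv, hcinv, mul_assoc]
        _ ≤ C * (1 / (1 - β)) ^ (1/p) := mul_le_mul_left hkey _
        _ = (1 / (1 - β)) ^ (1/p) * C := mul_comm _ _
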